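/- Let π be an n-profile with optimal two-facility cost C = OPT(π), and let g₁ = min(h₁, mean(π)), g₂ = max(h₂, mean(π)) as defined via Σᵢ max(0, h₁ − πᵢ) = C (h₁ ≥ π₁) and Σᵢ max(0, πᵢ − h₂) = C (h₂ ≤ πₙ). Then the 1-D solution σ = (g₁, g₂) satisfies cost(π, σ) ≤ 3·C. -/

import Mathlib

noncomputable def cost1 {n : ℕ} (π : Fin n → ℝ) (a b : ℝ) : ℝ :=
  ∑ i, min |π i - a| |π i - b|

private lemma max0_le_abs (y : ℝ) : max 0 y ≤ |y| :=
  max_le (abs_nonneg y) (le_abs_self y)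

theorem stmt7 {n : ℕ} (hn : 2 ≤ n) (π : Fin n → ℝ) (hπ : Monotone π) (C : ℝ)
    (hC : IsLeast {c : ℝ | ∃ a b : ℝ, a ≤ b ∧ cost1 π a b = c} C)
    (h1 h2 : ℝ)
    (hh1 : π ⟨0, by omega⟩ ≤ h1 ∧ (∑ i, max 0 (h1 - π i)) = C)
    (hh2 : h2 ≤ π ⟨n - 1, by omega⟩ ∧ (∑ i, max 0 (π i - h2)) = C) :
    cost1 π (min h1 ((∑ i, π i) / n)) (max h2 ((∑ i, π i) / n)) ≤ 3 * C := by
  obtain ⟨⟨a, b, hab, hcost⟩, hmin⟩ := hC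
  obtain ⟨i0, hi0⟩ : ∃ i0 : Fin n, π i0 ≤ h1 := ⟨⟨0, by omega⟩, hh1.1⟩
  obtain ⟨i1, hi1⟩ : ∃ i1 : Fin n, h2 ≤ π i1 := ⟨⟨n - 1, by omega⟩, hh2.1⟩
  have hh1b := hh1.2
  have hh2b := hh2.2
  have hn0 : (n : ℝ) ≠ 0 := Nat.cast_ne_zero.mpr (by omega)
  set m : ℝ := (∑ i, π i) / n with hm
  have hcc : (∑ i, min |π i - a| |π i - b|) = C := hcost
  have hC0 : 0 ≤ C := by
    rw [← hcc]
    exact Finset.sum_nonneg fun i _ => le_min (abs_nonneg _) (abs_nonneg _)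
  -- balance around the mean
  have hsum0 : ∑ i : Fin n, (π i - m) = 0 := by
    rw [Finset.sum_sub_distrib, Finset.sum_const, Finset.card_univ, Fintype.card_fin,
      nsmul_eq_mul, hm]
    field_simp
    ring
  have hbal : ∑ i, max 0 (π i - m) = ∑ i, max 0 (m - π i) := by
    have key : ∑ i, (max 0 (π i - m) - max 0 (m - π i)) = 0 := by
      have : ∀ i : Fin n, max 0 (π i - m) - max 0 (m - π i) = π i - m := by
        intro i
        rcases le_total (π i) m with h | h
        · rw [max_eq_left (by linarith), max_eq_right (by linarith)]; ring
        · rw [max_eq_right (by linarith), max_eq_left (by linarith)]; ring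
      rw [Finset.sum_congr rfl fun i _ => this i]
      exact hsum0
    rw [Finset.sum_sub_distrib] at key
    linarith
  rcases le_or_gt h2 m with hcase | hmh2
  · -- case h2 ≤ m : second facility is at m
    have hg2 : max h2 m = m := max_eq_right hcase
    have hstep : cost1 π (min h1 m) (max h2 m) ≤
        ∑ i, (max 0 (π i - h2) + max 0 (m - π i)) := by
      simp only [cost1, hg2]
      apply Finset.sum_le_sum
      intro i _
      refine (min_le_right _ _).trans ?_
      have t1 : (0:ℝ) ≤ max 0 (π i - h2) := le_max_left _ _
      have t2 : (0:ℝ) ≤ max 0 (m - π i) := le_max_left _ _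
      rcases le_total (π i) m with h | h
      · rw [abs_of_nonpos (by linarith)]
        have := le_max_right (0:ℝ) (m - π i)
        linarith
      · rw [abs_of_nonneg (by linarith)]
        have := le_max_right (0:ℝ) (π i - h2)
        linarith
    rw [Finset.sum_add_distrib, hh2b] at hstep
    have h3 : ∑ i, max 0 (m - π i) ≤ C := by
      rw [← hbal, ← hh2b]
      apply Finset.sum_le_sum
      intro i _
      exact max_le_max le_rfl (by linarith)
    linarith
  rcases le_or_gt m h1 with hcase2 | hh1m
  · -- case m ≤ h1 : first facility is at m
    have hg1 : min h1 m = m := min_eq_right hcase2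
    have hstep : cost1 π (min h1 m) (max h2 m) ≤
        ∑ i, (max 0 (h1 - π i) + max 0 (π i - m)) := by
      simp only [cost1, hg1]
      apply Finset.sum_le_sum
      intro i _
      refine (min_le_left _ _).trans ?_
      have t1 : (0:ℝ) ≤ max 0 (h1 - π i) := le_max_left _ _
      have t2 : (0:ℝ) ≤ max 0 (π i - m) := le_max_left _ _
      rcases le_total (π i) m with h | h
      · rw [abs_of_nonpos (by linarith)]
        have := le_max_right (0:ℝ) (h1 - π i)
        linarith
      · rw [abs_of_nonneg (by linarith)]
        have := le_max_right (0:ℝ) (π i - m)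
        linarith
    rw [Finset.sum_add_distrib, hh1b] at hstep
    have h3 : ∑ i, max 0 (π i - m) ≤ C := by
      rw [hbal, ← hh1b]
      apply Finset.sum_le_sum
      intro i _
      exact max_le_max le_rfl (by linarith)
    linarith
  · -- case h1 < m < h2 : the facilities are at h1 and h2
    have hg1 : min h1 m = h1 := min_eq_left hh1m.le
    have hg2 : max h2 m = h2 := max_eq_left hmh2.le
    have hh12 : h1 ≤ h2 := by linarith
    -- the optimal left facility is ≤ h1
    have hah1 : a ≤ h1 := by
      by_contra hcon
      push_neg at hcon
      have hlt : ∑ i, max 0 (h1 - π i) < ∑ i, min |π i - a| |π i - b| := by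
        apply Finset.sum_lt_sum
        · intro i _
          apply le_min
          · calc max 0 (h1 - π i) ≤ max 0 (a - π i) := max_le_max le_rfl (by linarith)
              _ ≤ |a - π i| := max0_le_abs _
              _ = |π i - a| := abs_sub_comm _ _
          · calc max 0 (h1 - π i) ≤ max 0 (b - π i) := max_le_max le_rfl (by linarith)
              _ ≤ |b - π i| := max0_le_abs _
              _ = |π i - b| := abs_sub_comm _ _
        · refine ⟨i0, Finset.mem_univ _, ?_⟩
          have e1 : |π i0 - a| = a - π i0 := by
            rw [abs_sub_comm, abs_of_nonneg (by linarith)]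
          have e2 : |π i0 - b| = b - π i0 := by
            rw [abs_sub_comm, abs_of_nonneg (by linarith)]
          rw [e1, e2, max_eq_right (by linarith : (0:ℝ) ≤ h1 - π i0)]
          exact lt_min (by linarith) (by linarith)
      rw [hh1b, hcc] at hlt
      exact absurd hlt (lt_irrefl C)
    -- the optimal right facility is ≥ h2
    have hbh2 : h2 ≤ b := by
      by_contra hcon
      push_neg at hcon
      have hlt : ∑ i, max 0 (π i - h2) < ∑ i, min |π i - a| |π i - b| := by
        apply Finset.sum_lt_sum
        · intro i _
          apply le_min
          · calc max 0 (π i - h2) ≤ max 0 (π i - a) := max_le_max le_rfl (by linarith)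
              _ ≤ |π i - a| := max0_le_abs _
          · calc max 0 (π i - h2) ≤ max 0 (π i - b) := max_le_max le_rfl (by linarith)
              _ ≤ |π i - b| := max0_le_abs _
        · refine ⟨i1, Finset.mem_univ _, ?_⟩
          have e1 : |π i1 - a| = π i1 - a := abs_of_nonneg (by linarith)
          have e2 : |π i1 - b| = π i1 - b := abs_of_nonneg (by linarith)
          rw [e1, e2, max_eq_right (by linarith : (0:ℝ) ≤ π i1 - h2)]
          exact lt_min (by linarith) (by linarith)
      rw [hh2b, hcc] at hlt
      exact absurd hlt (lt_irrefl C)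
    -- middle-sum bound
    have hM : ∑ i, min (max 0 (π i - h1)) (max 0 (h2 - π i)) ≤ C := by
      rw [← hcc]
      apply Finset.sum_le_sum
      intro i _
      apply min_le_min
      · calc max 0 (π i - h1) ≤ max 0 (π i - a) := max_le_max le_rfl (by linarith)
          _ ≤ |π i - a| := max0_le_abs _
      · calc max 0 (h2 - π i) ≤ max 0 (b - π i) := max_le_max le_rfl (by linarith)
          _ ≤ |b - π i| := max0_le_abs _
          _ = |π i - b| := abs_sub_comm _ _
    have hstep : cost1 π (min h1 m) (max h2 m) ≤
        ∑ i, (max 0 (h1 - π i) + max 0 (π i - h2)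
          + min (max 0 (π i - h1)) (max 0 (h2 - π i))) := by
      simp only [cost1, hg1, hg2]
      apply Finset.sum_le_sum
      intro i _
      have t1 : (0:ℝ) ≤ max 0 (h1 - π i) := le_max_left _ _
      have t2 : (0:ℝ) ≤ max 0 (π i - h2) := le_max_left _ _
      have t3 : (0:ℝ) ≤ min (max 0 (π i - h1)) (max 0 (h2 - π i)) :=
        le_min (le_max_left _ _) (le_max_left _ _)
      rcases le_total (π i) h1 with h | h
      · refine (min_le_left _ _).trans ?_
        rw [abs_of_nonpos (by linarith)]
        have := le_max_right (0:ℝ) (h1 - π i)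
        linarith
      · rcases le_total (π i) h2 with h' | h'
        · have e1 : |π i - h1| = π i - h1 := abs_of_nonneg (by linarith)
          have e2 : |π i - h2| = h2 - π i := by
            rw [abs_of_nonpos (by linarith)]; ring
          have e3 : max 0 (π i - h1) = π i - h1 := max_eq_right (by linarith)
          have e4 : max 0 (h2 - π i) = h2 - π i := max_eq_right (by linarith)
          rw [e1, e2, e3, e4]
          linarith [le_refl (min (π i - h1) (h2 - π i))]
        · refine (min_le_right _ _).trans ?_
          rw [abs_of_nonneg (by linarith)]
          have := le_max_right (0:ℝ) (π i - h2)
          linarith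
    rw [Finset.sum_add_distrib, Finset.sum_add_distrib, hh1b, hh2b] at hstep
    linarith
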